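/- arXiv:1004.3427 — 3 statements merged into one kernel-verified Lean document; each statement's English description precedes it below -/
import Mathlib

section
/- Let H(p) = -p·log₂(p) - (1-p)·log₂(1-p) be the binary entropy function (with H(0)=H(1)=0). Then the function f(t, s) = (1 + t/4)·H((4-s)/(4+t)) - t/2 - s/2, over the domain 0 ≤ t, 0 ≤ s, t + s ≤ 2, attains its maximum at t = 4/3, s = 0, where its value equals (4/3)·H(3/4) - 2/3. -/
/-- Binary entropy function (base 2), with H(0)=H(1)=0 via `Real.logb 2 0 = 0`. -/
noncomputable def binH (p : ℝ) : ℝ := -(p * Real.logb 2 p) - (1 - p) * Real.logb 2 (1 - p)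

lemma key_nat (p : ℝ) (hp : 0 < p) (hp1 : p ≤ 1) :
    -(p * Real.log p) - (1 - p) * Real.log (1 - p) ≤ 2 * Real.log 2 - p * Real.log 3 := by
  have h1 : p * (Real.log (3/4) - Real.log p) ≤ 3/4 - p := by
    rw [← Real.log_div (by norm_num) (ne_of_gt hp)]
    have := Real.log_le_sub_one_of_pos (div_pos (by norm_num : (0:ℝ) < 3/4) hp)
    calc p * Real.log (3/4 / p) ≤ p * (3/4 / p - 1) :=
          mul_le_mul_of_nonneg_left this hp.le
      _ = 3/4 - p := by field_simp
  have h2 : (1 - p) * (Real.log (1/4) - Real.log (1 - p)) ≤ 1/4 - (1 - p) := by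
    rcases eq_or_lt_of_le hp1 with h | h
    · rw [h]; norm_num
    · have hq : 0 < 1 - p := by linarith
      rw [← Real.log_div (by norm_num) (ne_of_gt hq)]
      have := Real.log_le_sub_one_of_pos (div_pos (by norm_num : (0:ℝ) < 1/4) hq)
      calc (1 - p) * Real.log (1/4 / (1 - p)) ≤ (1 - p) * (1/4 / (1 - p) - 1) :=
            mul_le_mul_of_nonneg_left this hq.le
        _ = 1/4 - (1 - p) := by field_simp
  have l34 : Real.log (3/4) = Real.log 3 - 2 * Real.log 2 := by
    rw [Real.log_div (by norm_num) (by norm_num), show (4:ℝ) = 2^2 by norm_num,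
      Real.log_pow]
    push_cast; ring
  have l14 : Real.log (1/4) = -(2 * Real.log 2) := by
    rw [show (1/4:ℝ) = (2^2)⁻¹ by norm_num, Real.log_inv, Real.log_pow]
    push_cast; ring
  rw [l34] at h1
  rw [l14] at h2
  nlinarith [h1, h2]

lemma key (p : ℝ) (hp : 0 < p) (hp1 : p ≤ 1) : binH p ≤ 2 - p * Real.logb 2 3 := by
  have hl2 : 0 < Real.log 2 := Real.log_pos one_lt_two
  unfold binH
  rw [Real.logb, Real.logb, Real.logb]
  have := key_nat p hp hp1
  have hgoal : -(p * (Real.log p / Real.log 2)) - (1 - p) * (Real.log (1 - p) / Real.log 2)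
      = (-(p * Real.log p) - (1 - p) * Real.log (1 - p)) / Real.log 2 := by ring
  rw [hgoal, div_le_iff₀ hl2]
  calc -(p * Real.log p) - (1 - p) * Real.log (1 - p)
      ≤ 2 * Real.log 2 - p * Real.log 3 := this
    _ = (2 - p * (Real.log 3 / Real.log 2)) * Real.log 2 := by field_simp

lemma logb24 : Real.logb 2 4 = 2 := by
  rw [show (4:ℝ) = 2^2 by norm_num, Real.logb_pow]
  simp [Real.logb_self_eq_one (by norm_num : (1:ℝ) < 2)]

lemma binH34 : binH (3/4) = 2 - (3/4) * Real.logb 2 3 := by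
  unfold binH
  have h34 : Real.logb 2 (3/4) = Real.logb 2 3 - 2 := by
    rw [Real.logb_div (by norm_num) (by norm_num), logb24]
  have h14 : Real.logb 2 (1 - 3/4 : ℝ) = -2 := by
    rw [show (1 - 3/4 : ℝ) = 4⁻¹ by norm_num, Real.logb_inv, logb24]
  rw [h34, h14]; ring

/-- The function f(t,s) = (1+t/4)·H((4-s)/(4+t)) - t/2 - s/2 on
{0 ≤ t, 0 ≤ s, t + s ≤ 2} attains its maximum at (t,s) = (4/3, 0),
with value (4/3)·H(3/4) - 2/3. -/
theorem stmt_0 :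
    (∀ t s : ℝ, 0 ≤ t → 0 ≤ s → t + s ≤ 2 →
      (1 + t / 4) * binH ((4 - s) / (4 + t)) - t / 2 - s / 2
        ≤ (4 / 3) * binH (3 / 4) - 2 / 3) ∧
    (1 + (4 / 3 : ℝ) / 4) * binH ((4 - 0) / (4 + 4 / 3)) - (4 / 3) / 2 - 0 / 2
        = (4 / 3) * binH (3 / 4) - 2 / 3 := by
  constructor
  · intro t s ht hs hts
    set p : ℝ := (4 - s) / (4 + t) with hpdef
    have h4t : (0:ℝ) < 4 + t := by linarith
    have hp0 : 0 < p := div_pos (by linarith) h4t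
    have hp1 : p ≤ 1 := by rw [hpdef, div_le_one h4t]; linarith
    have hb := key p hp0 hp1
    have hm : (0:ℝ) ≤ 1 + t / 4 := by linarith
    have hmul : (1 + t/4) * binH p ≤ (1 + t/4) * (2 - p * Real.logb 2 3) :=
      mul_le_mul_of_nonneg_left hb hm
    have hmp : (1 + t/4) * p = 1 - s/4 := by
      rw [hpdef]; field_simp
    have hL0 : 0 ≤ Real.logb 2 3 := Real.logb_nonneg (by norm_num) (by norm_num)
    have hL2 : Real.logb 2 3 ≤ 2 := by
      have h34 : Real.logb 2 3 ≤ Real.logb 2 4 :=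
        Real.logb_le_logb_of_le (by norm_num : (1:ℝ) < 2) (by norm_num : (0:ℝ) < 3)
          (by norm_num : (3:ℝ) ≤ 4)
      rw [logb24] at h34; exact h34
    have hexp : (1 + t/4) * (2 - p * Real.logb 2 3)
        = (1 + t/4) * 2 - (1 - s/4) * Real.logb 2 3 := by
      rw [← hmp]; ring
    rw [binH34]
    have hs2 : 0 ≤ s * (2 - Real.logb 2 3) := mul_nonneg hs (by linarith)
    nlinarith [hmul, hexp]
  · have harg : ((4:ℝ) - 0) / (4 + 4/3) = 3/4 := by norm_num
    rw [harg]; ring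
end

section
/- Let H be the binary entropy function. The function g(t) = (1 + t/4)·H(4/(4+t)) - t/2 on [0, 2] is maximized at t = 4/3, with maximum value (4/3)·H(3/4) - 2/3. -/
lemma rhs_val : (4 / 3 : ℝ) * binH (3 / 4) - 2 / 3
    = (2 * Real.log 2 - Real.log 3) / Real.log 2 := by
  have hL2 : Real.log 2 ≠ 0 := by
    have := Real.log_pos (by norm_num : (1:ℝ) < 2); linarith
  have h34 : Real.log ((3:ℝ)/4) = Real.log 3 - 2 * Real.log 2 := by
    rw [Real.log_div (by norm_num) (by norm_num), show (4:ℝ) = 2^2 by norm_num,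
      Real.log_pow]; push_cast; ring
  have h14 : Real.log ((1:ℝ) - 3/4) = -(2 * Real.log 2) := by
    norm_num
    rw [one_div, Real.log_inv, show (4:ℝ) = 2^2 by norm_num, Real.log_pow]; push_cast; ring
  unfold binH Real.logb
  rw [h14]
  rw [h34]
  field_simp
  ring

/-- g(t) = (1+t/4)·H(4/(4+t)) - t/2 on [0,2] is maximized at t = 4/3,
with maximum value (4/3)·H(3/4) - 2/3. -/
theorem stmt_1 :
    (∀ t ∈ Set.Icc (0 : ℝ) 2,
      (1 + t / 4) * binH (4 / (4 + t)) - t / 2 ≤ (4 / 3) * binH (3 / 4) - 2 / 3) ∧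
    (4 / 3 : ℝ) ∈ Set.Icc (0 : ℝ) 2 ∧
    (1 + (4 / 3 : ℝ) / 4) * binH (4 / (4 + 4 / 3)) - (4 / 3) / 2
      = (4 / 3) * binH (3 / 4) - 2 / 3 := by
  have hL2 : 0 < Real.log 2 := Real.log_pos (by norm_num)
  have hL3 : Real.log 3 ≤ 2 * Real.log 2 := by
    have : Real.log 3 ≤ Real.log 4 := Real.log_le_log (by norm_num) (by norm_num)
    rw [show (4:ℝ) = 2^2 by norm_num, Real.log_pow] at this
    push_cast at this; linarith
  refine ⟨?_, by norm_num, ?_⟩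
  · intro t ht
    obtain ⟨ht0, ht2⟩ := ht
    rw [rhs_val]
    rcases eq_or_lt_of_le ht0 with h0 | h0
    · -- t = 0
      rw [← h0]
      norm_num
      have : binH 1 = 0 := by
        unfold binH
        simp [Real.logb]
      rw [this]
      exact div_nonneg (by linarith) (le_of_lt hL2)
    · -- t > 0
      have h4t : (0:ℝ) < 4 + t := by linarith
      have h4t' : (4:ℝ) + t ≠ 0 := ne_of_gt h4t
      have ht' : t ≠ 0 := ne_of_gt h0
      set Lt := Real.log t with hLt
      set Ls := Real.log (4 + t) with hLs
      -- rewrite LHS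
      have hcomp : (1:ℝ) - 4/(4+t) = t/(4+t) := by field_simp; ring
      have hlog1 : Real.log (4/(4+t)) = 2 * Real.log 2 - Ls := by
        rw [Real.log_div (by norm_num) h4t', show (4:ℝ) = 2^2 by norm_num, Real.log_pow]
        push_cast; rw [hLs]; ring
      have hlog2 : Real.log (t/(4+t)) = Lt - Ls := Real.log_div ht' h4t'
      have e1 : (1 + t / 4) * binH (4 / (4 + t)) - t / 2
          = ((1 + t/4) * Ls - (t/4) * Lt - (2 + t/2) * Real.log 2) / Real.log 2 := by
        unfold binH Real.logb
        rw [hcomp, hlog1, hlog2]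
        field_simp
        ring
      rw [e1, div_le_div_iff_of_pos_right hL2]
      -- key inequality via log x ≤ x - 1
      have h1 : Real.log ((4+t)/(4*t)) ≤ (4+t)/(4*t) - 1 :=
        Real.log_le_sub_one_of_pos (by positivity)
      have h2 : Real.log (3*(4+t)/16) ≤ 3*(4+t)/16 - 1 :=
        Real.log_le_sub_one_of_pos (by positivity)
      have he1 : Real.log ((4+t)/(4*t)) = Ls - 2 * Real.log 2 - Lt := by
        rw [Real.log_div h4t' (by positivity), Real.log_mul (by norm_num) ht',
          show (4:ℝ) = 2^2 by norm_num, Real.log_pow]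
        push_cast; rw [hLs, hLt]; ring
      have he2 : Real.log (3*(4+t)/16) = Real.log 3 + Ls - 4 * Real.log 2 := by
        rw [Real.log_div (by positivity) (by norm_num), Real.log_mul (by norm_num) h4t',
          show (16:ℝ) = 2^4 by norm_num, Real.log_pow]
        push_cast; ring
      rw [he1] at h1
      rw [he2] at h2
      have hq1 : (4+t)/(4*t) - 1 = (4 - 3*t)/(4*t) := by field_simp; ring
      have hq2 : (3*(4+t)/16 : ℝ) - 1 = (3*t - 4)/16 := by ring
      rw [hq1] at h1
      rw [hq2] at h2
      -- combine: (t/4)*h1 + h2 gives the result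
      have hmul : (t/4) * (Ls - 2*Real.log 2 - Lt) ≤ (t/4) * ((4 - 3*t)/(4*t)) := by
        apply mul_le_mul_of_nonneg_left h1 (by positivity)
      have hval : (t/4) * ((4 - 3*t)/(4*t)) = (4 - 3*t)/16 := by
        field_simp; ring
      nlinarith [hmul, h2]
  · have : (4:ℝ)/(4 + 4/3) = 3/4 := by norm_num
    rw [this]
    norm_num
end

section
/- Non-existence of a symmetric-consistent deterministic auxiliary: there do not exist, for any index i with positive probability, nonnegative reals aᵢ, bᵢ, cᵢ, dᵢ (not all zero) such that (i) at least one of aᵢ, bᵢ is zero, (ii) at least one of cᵢ, dᵢ is zero, (iii) (aᵢ + bᵢ)/2 = cᵢ, and (iv) (cᵢ + dᵢ)/2 = bᵢ. -/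
/-- Non-existence of a symmetric-consistent deterministic auxiliary: there are no
nonnegative reals a, b, c, d, not all zero, with (a=0 ∨ b=0), (c=0 ∨ d=0),
(a+b)/2 = c and (c+d)/2 = b. -/
theorem stmt_13 :
    ¬ ∃ a b c d : ℝ, 0 ≤ a ∧ 0 ≤ b ∧ 0 ≤ c ∧ 0 ≤ d ∧
      ¬ (a = 0 ∧ b = 0 ∧ c = 0 ∧ d = 0) ∧
      (a = 0 ∨ b = 0) ∧ (c = 0 ∨ d = 0) ∧
      (a + b) / 2 = c ∧ (c + d) / 2 = b := by
  rintro ⟨a, b, c, d, ha, hb, hc, hd, hne, hab, hcd, h1, h2⟩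
  apply hne
  rcases hab with rfl | rfl <;> rcases hcd with rfl | rfl <;>
    constructor <;> try constructor <;> try constructor
  all_goals linarith
end
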